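/- Let K₁ ⊆ ℝ^{n₁} and K₂ ⊆ ℝ^{n₂} be regular cones, M = (K₁ ∩ ℤ^{n₁}) × K₂, A ∈ ℝ^{m×n₁}, G ∈ ℝ^{m×n₂}, c ∈ ℝ^{n₁}, d ∈ ℝ^{n₂}. Let I(M) be a generating set of M, I₁ a generating set of K₁ ∩ ℤ^{n₁}, and I₂ a generating set of K₂ (with nonnegative-integer coefficients). Let f : ℝ^m → ℝ be subadditive with f(0) = 0. Then f(Au + Gv) ≤ c^Tu + d^Tv for all (u,v) ∈ I(M) if and only if both f(Au) ≤ c^Tu for all u ∈ I₁ and f̄(Gv) ≤ d^Tv for all v ∈ I₂, where f̄(x) := limsup_{δ→0⁺} f(δx)/δ. -/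

import Mathlib

open Matrix

/-- A regular cone: closed, convex, a cone, pointed, and full-dimensional. -/
def IsRegularCone {k : ℕ} (C : Set (Fin k → ℝ)) : Prop :=
  IsClosed C ∧ Convex ℝ C ∧ (∀ x ∈ C, ∀ t : ℝ, 0 ≤ t → t • x ∈ C) ∧
    C ∩ (-C) = {0} ∧ (interior C).Nonempty

/-- `I` is a generating set of the monoid `M`: `I ⊆ M` and every element of `M`
is a finite nonnegative-integer combination of elements of `I`. -/
def IsGenSet {V : Type*} [AddCommMonoid V] [Module ℝ V] (M I : Set V) : Prop :=
  I ⊆ M ∧ ∀ w ∈ M, ∃ (p : ℕ) (h : Fin p → V) (lam : Fin p → ℕ),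
    (∀ i, h i ∈ I) ∧ w = ∑ i, (lam i : ℝ) • h i

section Aux
variable {m : ℕ} {f : (Fin m → ℝ) → ℝ}

lemma f_nsmul (hsub : ∀ u v : Fin m → ℝ, f (u + v) ≤ f u + f v) (hf0 : f 0 = 0) :
    ∀ (n : ℕ) (x : Fin m → ℝ), f ((n : ℝ) • x) ≤ n * f x := by
  intro n
  induction n with
  | zero => intro x; simp [hf0]
  | succ n ih =>
    intro x
    have h1 : ((n + 1 : ℕ) : ℝ) • x = (n : ℝ) • x + x := by push_cast; module
    rw [h1]
    calc f ((n : ℝ) • x + x) ≤ f ((n : ℝ) • x) + f x := hsub _ _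
      _ ≤ n * f x + f x := by linarith [ih x]
      _ = ((n + 1 : ℕ) : ℝ) * f x := by push_cast; ring

lemma f_sum (hsub : ∀ u v : Fin m → ℝ, f (u + v) ≤ f u + f v) (hf0 : f 0 = 0)
    {ι : Type*} (s : Finset ι) (y : ι → (Fin m → ℝ)) :
    f (∑ i ∈ s, y i) ≤ ∑ i ∈ s, f (y i) := by
  classical
  induction s using Finset.induction_on with
  | empty => simp [hf0]
  | insert _ _ hx ih =>
    rename_i a s
    rw [Finset.sum_insert hx, Finset.sum_insert hx]
    calc f (y a + ∑ i ∈ s, y i) ≤ f (y a) + f (∑ i ∈ s, y i) := hsub _ _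
      _ ≤ f (y a) + ∑ i ∈ s, f (y i) := by linarith

lemma gen_bound {V : Type*} [AddCommMonoid V] [Module ℝ V]
    (hsub : ∀ u v : Fin m → ℝ, f (u + v) ≤ f u + f v) (hf0 : f 0 = 0)
    (g : V →ₗ[ℝ] (Fin m → ℝ)) (φ : V →ₗ[ℝ] ℝ) {M I : Set V}
    (hgen : IsGenSet M I) (hb : ∀ h ∈ I, f (g h) ≤ φ h) :
    ∀ w ∈ M, f (g w) ≤ φ w := by
  intro w hw
  obtain ⟨p, h, lam, hhI, hw'⟩ := hgen.2 w hw
  rw [hw', map_sum, map_sum]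
  calc f (∑ i, g ((lam i : ℝ) • h i)) ≤ ∑ i, f (g ((lam i : ℝ) • h i)) :=
        f_sum hsub hf0 _ _
    _ ≤ ∑ i, φ ((lam i : ℝ) • h i) := by
        apply Finset.sum_le_sum
        intro i _
        rw [_root_.map_smul, _root_.map_smul, smul_eq_mul]
        calc f ((lam i : ℝ) • g (h i)) ≤ lam i * f (g (h i)) := f_nsmul hsub hf0 _ _
          _ ≤ lam i * φ (h i) :=
              mul_le_mul_of_nonneg_left (hb _ (hhI i)) (by positivity)

end Aux

/-- Equivalence of the dual constraints over a generating set of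
`M = (K₁ ∩ ℤ^{n₁}) × K₂` with the split constraints over generating sets of the
two factors (the continuous part using `f̄(x) = limsup_{δ→0⁺} f(δx)/δ`). -/
theorem dual_constraints_split {n₁ n₂ m : ℕ}
    (K₁ : Set (Fin n₁ → ℝ)) (K₂ : Set (Fin n₂ → ℝ))
    (hK₁ : IsRegularCone K₁) (hK₂ : IsRegularCone K₂)
    (A : Matrix (Fin m) (Fin n₁) ℝ) (G : Matrix (Fin m) (Fin n₂) ℝ)
    (c : Fin n₁ → ℝ) (d : Fin n₂ → ℝ)
    (M : Set ((Fin n₁ → ℝ) × (Fin n₂ → ℝ)))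
    (hM : M = {x ∈ K₁ | ∀ i, ∃ k : ℤ, x i = (k : ℝ)} ×ˢ K₂)
    (I : Set ((Fin n₁ → ℝ) × (Fin n₂ → ℝ))) (hI : IsGenSet M I)
    (I₁ : Set (Fin n₁ → ℝ)) (I₂ : Set (Fin n₂ → ℝ))
    (hI₁ : IsGenSet {x ∈ K₁ | ∀ i, ∃ k : ℤ, x i = (k : ℝ)} I₁)
    (hI₂ : IsGenSet K₂ I₂)
    (f : (Fin m → ℝ) → ℝ)
    (hsub : ∀ u v : Fin m → ℝ, f (u + v) ≤ f u + f v)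
    (hf0 : f 0 = 0) :
    (∀ p ∈ I, f (A.mulVec p.1 + G.mulVec p.2) ≤ c ⬝ᵥ p.1 + d ⬝ᵥ p.2) ↔
      ((∀ u ∈ I₁, f (A.mulVec u) ≤ c ⬝ᵥ u) ∧
        (∀ v ∈ I₂,
          Filter.limsup (fun δ : ℝ => ((f (δ • G.mulVec v) / δ : ℝ) : EReal))
              (nhdsWithin 0 (Set.Ioi 0)) ≤ ((d ⬝ᵥ v : ℝ) : EReal))) := by
  -- linear maps
  set gP : ((Fin n₁ → ℝ) × (Fin n₂ → ℝ)) →ₗ[ℝ] (Fin m → ℝ) :=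
    { toFun := fun p => A.mulVec p.1 + G.mulVec p.2
      map_add' := by intro x y; simp [Matrix.mulVec_add]; try abel
      map_smul' := by intro t x; simp [Matrix.mulVec_smul]; try module } with hgP
  set φP : ((Fin n₁ → ℝ) × (Fin n₂ → ℝ)) →ₗ[ℝ] ℝ :=
    { toFun := fun p => c ⬝ᵥ p.1 + d ⬝ᵥ p.2
      map_add' := by intro x y; simp [dotProduct_add]; try ring
      map_smul' := by intro t x; simp [dotProduct_smul]; try ring } with hφP
  set g₁ : (Fin n₁ → ℝ) →ₗ[ℝ] (Fin m → ℝ) := A.mulVecLin with hg₁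
  set φ₁ : (Fin n₁ → ℝ) →ₗ[ℝ] ℝ :=
    { toFun := fun u => c ⬝ᵥ u
      map_add' := by intro x y; simp [dotProduct_add]
      map_smul' := by intro t x; simp [dotProduct_smul] } with hφ₁
  set g₂ : (Fin n₂ → ℝ) →ₗ[ℝ] (Fin m → ℝ) := G.mulVecLin with hg₂
  set φ₂ : (Fin n₂ → ℝ) →ₗ[ℝ] ℝ :=
    { toFun := fun v => d ⬝ᵥ v
      map_add' := by intro x y; simp [dotProduct_add]
      map_smul' := by intro t x; simp [dotProduct_smul] } with hφ₂
  -- 0 ∈ K₁, 0 ∈ K₂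
  obtain ⟨x₁, hx₁⟩ := hK₁.2.2.2.2
  obtain ⟨x₂, hx₂⟩ := hK₂.2.2.2.2
  have h0K₁ : (0 : Fin n₁ → ℝ) ∈ K₁ := by
    have := hK₁.2.2.1 x₁ (interior_subset hx₁) 0 le_rfl
    simpa using this
  have h0K₂ : (0 : Fin n₂ → ℝ) ∈ K₂ := by
    have := hK₂.2.2.1 x₂ (interior_subset hx₂) 0 le_rfl
    simpa using this
  have h0M₁ : (0 : Fin n₁ → ℝ) ∈ {x ∈ K₁ | ∀ i, ∃ k : ℤ, x i = (k : ℝ)} :=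
    ⟨h0K₁, fun i => ⟨0, by simp⟩⟩
  constructor
  · -- forward
    intro hall
    have hAll : ∀ w ∈ M, f (gP w) ≤ φP w :=
      gen_bound hsub hf0 gP φP hI (fun p hp => hall p hp)
    constructor
    · intro u hu
      have hmem : ((u, 0) : (Fin n₁ → ℝ) × (Fin n₂ → ℝ)) ∈ M := by
        rw [hM]
        exact ⟨hI₁.1 hu, h0K₂⟩
      have := hAll _ hmem
      simpa [hgP, hφP, hf0] using this
    · intro v hv
      have hpt : ∀ δ : ℝ, δ ∈ Set.Ioi (0:ℝ) →
          ((f (δ • G.mulVec v) / δ : ℝ) : EReal) ≤ ((d ⬝ᵥ v : ℝ) : EReal) := by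
        intro δ hδ
        have hδ0 : (0:ℝ) < δ := hδ
        have hmem : ((0, δ • v) : (Fin n₁ → ℝ) × (Fin n₂ → ℝ)) ∈ M := by
          rw [hM]
          exact ⟨h0M₁, hK₂.2.2.1 v (hI₂.1 hv) δ hδ0.le⟩
        have h1 := hAll _ hmem
        simp only [hgP, hφP, LinearMap.coe_mk, AddHom.coe_mk] at h1
        rw [Matrix.mulVec_zero, Matrix.mulVec_smul, dotProduct_zero,
          dotProduct_smul] at h1
        simp only [zero_add, smul_eq_mul] at h1
        have : f (δ • G.mulVec v) / δ ≤ d ⬝ᵥ v := by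
          rw [div_le_iff₀ hδ0]
          linarith
        exact EReal.coe_le_coe_iff.mpr this
      exact Filter.limsup_le_of_le (by isBoundedDefault)
        (by filter_upwards [eventually_mem_nhdsWithin] with δ hδ using hpt δ hδ)
  · -- backward
    rintro ⟨h₁, h₂⟩ p hp
    have hpM := hI.1 hp
    rw [hM] at hpM
    obtain ⟨hp₁, hp₂⟩ := hpM
    -- f (A p.1) ≤ c ⬝ᵥ p.1
    have hA : f (A.mulVec p.1) ≤ c ⬝ᵥ p.1 := by
      have := gen_bound hsub hf0 g₁ φ₁ hI₁ (fun u hu => by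
        simpa [hg₁, hφ₁] using h₁ u hu) p.1 hp₁
      simpa [hg₁, hφ₁] using this
    -- f (G v) ≤ d ⬝ᵥ v for v ∈ I₂
    have hGI : ∀ v ∈ I₂, f (G.mulVec v) ≤ d ⬝ᵥ v := by
      intro v hv
      by_contra hlt
      push_neg at hlt
      set ε := f (G.mulVec v) - d ⬝ᵥ v with hε
      have hε0 : 0 < ε := by simp [hε]; linarith
      have hlim := h₂ v hv
      have hlt2 : Filter.limsup (fun δ : ℝ => ((f (δ • G.mulVec v) / δ : ℝ) : EReal))
          (nhdsWithin 0 (Set.Ioi 0)) < ((d ⬝ᵥ v + ε/2 : ℝ) : EReal) :=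
        lt_of_le_of_lt hlim (by exact_mod_cast EReal.coe_lt_coe_iff.mpr (by linarith))
      have hev := Filter.eventually_lt_of_limsup_lt hlt2
      -- the sequence 1/(N+1) tends to 𝓝[>] 0
      have htend : Filter.Tendsto (fun N : ℕ => (1 : ℝ) / (N + 1)) Filter.atTop
          (nhdsWithin 0 (Set.Ioi 0)) := by
        apply tendsto_nhdsWithin_of_tendsto_nhds_of_eventually_within
        · exact tendsto_one_div_add_atTop_nhds_zero_nat
        · filter_upwards with N
          exact Set.mem_Ioi.mpr (by positivity)
      obtain ⟨N, hN⟩ := (htend.eventually hev).exists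
      set δ := (1 : ℝ) / (N + 1) with hδdef
      have hδ0 : (0:ℝ) < δ := by positivity
      have hN' : f (δ • G.mulVec v) / δ < d ⬝ᵥ v + ε/2 := EReal.coe_lt_coe_iff.mp hN
      have hkey : f (G.mulVec v) ≤ (N + 1 : ℕ) * f (δ • G.mulVec v) := by
        have : ((N + 1 : ℕ) : ℝ) • (δ • G.mulVec v) = G.mulVec v := by
          rw [smul_smul, hδdef]
          push_cast
          rw [mul_one_div, div_self (by positivity), one_smul]
        calc f (G.mulVec v) = f (((N + 1 : ℕ) : ℝ) • (δ • G.mulVec v)) := by rw [this]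
          _ ≤ (N + 1 : ℕ) * f (δ • G.mulVec v) := f_nsmul hsub hf0 _ _
      have hdiv : f (δ • G.mulVec v) < δ * (d ⬝ᵥ v + ε/2) := by
        rw [div_lt_iff₀ hδ0] at hN'
        linarith
      have hNδ : ((N + 1 : ℕ) : ℝ) * δ = 1 := by
        rw [hδdef]; push_cast; field_simp
      have : f (G.mulVec v) < d ⬝ᵥ v + ε/2 := by
        calc f (G.mulVec v) ≤ (N + 1 : ℕ) * f (δ • G.mulVec v) := hkey
          _ < ((N + 1 : ℕ) : ℝ) * (δ * (d ⬝ᵥ v + ε/2)) := by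
              apply mul_lt_mul_of_pos_left hdiv (by positivity)
          _ = d ⬝ᵥ v + ε/2 := by rw [← mul_assoc, hNδ, one_mul]
      simp [hε] at this
      linarith
    have hG : f (G.mulVec p.2) ≤ d ⬝ᵥ p.2 := by
      have := gen_bound hsub hf0 g₂ φ₂ hI₂ (fun v hv => by
        simpa [hg₂, hφ₂] using hGI v hv) p.2 hp₂
      simpa [hg₂, hφ₂] using this
    calc f (A.mulVec p.1 + G.mulVec p.2) ≤ f (A.mulVec p.1) + f (G.mulVec p.2) :=
          hsub _ _
      _ ≤ c ⬝ᵥ p.1 + d ⬝ᵥ p.2 := add_le_add hA hG
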